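/- Let g : [a,b] → ℝ be continuous. For each m take the equal partition with tags tₖ*, nonnegative weights wₖ(m) with ∑_{k=1}^m |wₖ(m) − (b−a)/m| → 0, and index sets J(m) ⊆ {1,…,m} with |J(m)|·max_k wₖ(m) → 0 as m → ∞. Then ∑_{k ∉ J(m)} g(tₖ*)·wₖ(m) → ∫_a^b g(t) dt. -/

import Mathlib

open Filter Topology Set

lemma riemann_aux
    (a b : ℝ) (hab : a < b)
    (g : ℝ → ℝ) (hg : ContinuousOn g (Icc a b))
    (ts : ℕ → ℕ → ℝ)
    (hts : ∀ (m k : ℕ), k < m →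
      ts m k ∈ Icc (a + (k : ℝ) * (b - a) / (m : ℝ)) (a + ((k : ℝ) + 1) * (b - a) / (m : ℝ))) :
    Tendsto (fun m : ℕ => ∑ k ∈ Finset.range m, g (ts m k) * ((b - a) / (m : ℝ)))
      atTop (𝓝 (∫ t in a..b, g t)) := by
  have hba : (0:ℝ) < b - a := by linarith
  -- points of the partition
  obtain ⟨x, hx⟩ : ∃ x : ℕ → ℕ → ℝ, x = fun (m k : ℕ) => a + (k : ℝ) * (b - a) / (m : ℝ) := ⟨fun (m k : ℕ) => a + (k : ℝ) * (b - a) / (m : ℝ), rfl⟩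
  have hxmono : ∀ m : ℕ, 0 < m → ∀ k : ℕ, x m k ≤ x m (k + 1) := by
    intro m hm k
    have : (0:ℝ) < m := by exact_mod_cast hm
    simp only [hx, Nat.cast_add, Nat.cast_one]
    have : (k : ℝ) * (b - a) / m ≤ ((k : ℝ) + 1) * (b - a) / m := by
      gcongr <;> linarith
    linarith
  have hxIcc : ∀ m : ℕ, 0 < m → ∀ k : ℕ, k ≤ m → x m k ∈ Icc a b := by
    intro m hm k hk
    have hm' : (0:ℝ) < m := by exact_mod_cast hm
    have hk' : (k:ℝ) ≤ m := by exact_mod_cast hk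
    constructor
    · simp only [hx]
      have : 0 ≤ (k : ℝ) * (b - a) / m := by positivity
      linarith
    · simp only [hx]
      have : (k : ℝ) * (b - a) / m ≤ (b - a) := by
        rw [div_le_iff₀ hm']
        nlinarith
      linarith
  have hsub : ∀ m : ℕ, 0 < m → ∀ k : ℕ, k < m → Icc (x m k) (x m (k+1)) ⊆ Icc a b := by
    intro m hm k hk
    exact Icc_subset_Icc (hxIcc m hm k hk.le).1 (hxIcc m hm (k+1) hk).2
  have hint : ∀ m : ℕ, 0 < m → ∀ k : ℕ, k < m →
      IntervalIntegrable g MeasureTheory.volume (x m k) (x m (k+1)) := by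
    intro m hm k hk
    apply ContinuousOn.intervalIntegrable
    rw [uIcc_of_le (hxmono m hm k)]
    exact hg.mono (hsub m hm k hk)
  have hdiff : ∀ m : ℕ, 0 < m → ∀ k : ℕ, x m (k+1) - x m k = (b - a) / m := by
    intro m hm k
    have hm' : (0:ℝ) < m := by exact_mod_cast hm
    simp only [hx, Nat.cast_add, Nat.cast_one]
    field_simp
    ring
  -- uniform continuity
  have huc := Metric.uniformContinuousOn_iff.mp
    (isCompact_Icc.uniformContinuousOn_of_continuous hg)
  rw [Metric.tendsto_atTop]
  intro ε hε
  obtain ⟨δ, hδ, hδ'⟩ := huc (ε / (2 * (b - a))) (by positivity)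
  obtain ⟨N, hN⟩ := exists_nat_gt ((b - a) / δ)
  refine ⟨N + 1, fun m hm => ?_⟩
  have hm0 : 0 < m := lt_of_lt_of_le (Nat.succ_pos N) hm
  have hm' : (0:ℝ) < m := by exact_mod_cast hm0
  have hmesh : (b - a) / m < δ := by
    rw [div_lt_iff₀ hm']
    have hNm : ((b - a) / δ) < m := lt_of_lt_of_le hN (by exact_mod_cast le_trans (Nat.le_succ N) hm)
    rw [div_lt_iff₀ hδ] at hNm
    linarith [hNm]
  -- split the integral
  have hsumint : ∑ k ∈ Finset.range m, ∫ t in (x m k)..(x m (k+1)), g t = ∫ t in a..b, g t := by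
    rw [intervalIntegral.sum_integral_adjacent_intervals (fun k hk => hint m hm0 k hk)]
    congr 1
    · simp [hx]
    · simp only [hx]
      field_simp
      ring
  rw [Real.dist_eq]
  have key : (∑ k ∈ Finset.range m, g (ts m k) * ((b - a) / (m : ℝ))) - ∫ t in a..b, g t
      = ∑ k ∈ Finset.range m,
        ((g (ts m k) * ((b - a) / (m : ℝ))) - ∫ t in (x m k)..(x m (k+1)), g t) := by
    rw [Finset.sum_sub_distrib, hsumint]
  rw [key]
  have hterm : ∀ k ∈ Finset.range m,
      |(g (ts m k) * ((b - a) / (m : ℝ))) - ∫ t in (x m k)..(x m (k+1)), g t|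
        ≤ (ε / (2 * (b - a))) * ((b - a) / m) := by
    intro k hk
    rw [Finset.mem_range] at hk
    have hts0 := hts m k hk
    have hts' : ts m k ∈ Icc (x m k) (x m (k + 1)) := by
      simp only [hx, Nat.cast_add, Nat.cast_one]
      exact hts0
    have h1 : (g (ts m k) * ((b - a) / (m : ℝ))) = ∫ t in (x m k)..(x m (k+1)), g (ts m k) := by
      rw [intervalIntegral.integral_const, hdiff m hm0 k, smul_eq_mul, mul_comm]
    rw [h1, ← intervalIntegral.integral_sub (by simp) (hint m hm0 k hk)]
    have hC : ∀ t ∈ Set.uIoc (x m k) (x m (k+1)), ‖g (ts m k) - g t‖ ≤ ε / (2 * (b - a)) := by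
      intro t ht
      rw [uIoc_of_le (hxmono m hm0 k)] at ht
      have htIcc : t ∈ Icc (x m k) (x m (k+1)) := Ioc_subset_Icc_self ht
      have htab : t ∈ Icc a b := hsub m hm0 k hk htIcc
      have htsab : ts m k ∈ Icc a b := hsub m hm0 k hk hts'
      have hdist : dist (ts m k) t < δ := by
        rw [Real.dist_eq]
        have h2 := hdiff m hm0 k
        have hx1 : x m k ≤ ts m k := hts'.1
        have hx2 : ts m k ≤ x m (k+1) := hts'.2
        have hx3 : x m k ≤ t := htIcc.1
        have hx4 : t ≤ x m (k+1) := htIcc.2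
        have : |ts m k - t| ≤ (b - a) / (m:ℝ) := by
          rw [abs_le]
          constructor
          · linarith
          · linarith
        linarith
      have hgd := hδ' (ts m k) htsab t htab hdist
      rw [Real.dist_eq] at hgd
      rw [Real.norm_eq_abs]
      linarith
    have hb := intervalIntegral.norm_integral_le_of_norm_le_const hC
    rw [Real.norm_eq_abs, hdiff m hm0 k,
      abs_of_nonneg (by positivity : (0:ℝ) ≤ (b - a) / (m:ℝ))] at hb
    exact hb
  calc |∑ k ∈ Finset.range m,
        ((g (ts m k) * ((b - a) / (m : ℝ))) - ∫ t in (x m k)..(x m (k+1)), g t)|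
      ≤ ∑ k ∈ Finset.range m, |(g (ts m k) * ((b - a) / (m : ℝ))) - ∫ t in (x m k)..(x m (k+1)), g t| :=
        Finset.abs_sum_le_sum_abs _ _
    _ ≤ ∑ k ∈ Finset.range m, (ε / (2 * (b - a))) * ((b - a) / m) := Finset.sum_le_sum hterm
    _ = m * ((ε / (2 * (b - a))) * ((b - a) / m)) := by simp [Finset.sum_const, mul_comm]
    _ = ε / 2 := by field_simp
    _ < ε := by linarith

/-- Common generalization of the deleting-items and disturbing-mesh theorems for
one-dimensional Riemann sums of a continuous function: with nonnegative weights
whose total deviation from (b−a)/m tends to 0 and deleted index sets J(m) with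
|J(m)|·max_k wₖ(m) → 0, the incomplete weighted sums converge to ∫_a^b g. -/
theorem deleting_disturbing_continuous
    (a b : ℝ) (hab : a < b)
    (g : ℝ → ℝ) (hg : ContinuousOn g (Icc a b))
    -- tags in the equal partition
    (ts : ℕ → ℕ → ℝ)
    (hts : ∀ (m k : ℕ), k < m →
      ts m k ∈ Icc (a + (k : ℝ) * (b - a) / (m : ℝ)) (a + ((k : ℝ) + 1) * (b - a) / (m : ℝ)))
    -- nonnegative weights
    (w : ℕ → ℕ → ℝ)
    (hw : ∀ (m k : ℕ), k < m → 0 ≤ w m k)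
    (hwsum : Tendsto (fun m : ℕ => ∑ k ∈ Finset.range m, |w m k - (b - a) / (m : ℝ)|)
      atTop (𝓝 0))
    -- deleted index sets with |J(m)| · max_k wₖ(m) → 0
    (J : ℕ → Finset ℕ)
    (hJsub : ∀ m : ℕ, J m ⊆ Finset.range m)
    (hJmax : Tendsto (fun m : ℕ => ((J m).card : ℝ) * ⨆ k ∈ Finset.range m, w m k)
      atTop (𝓝 0)) :
    Tendsto (fun m : ℕ => ∑ k ∈ Finset.range m \ J m, g (ts m k) * w m k)
      atTop (𝓝 (∫ t in a..b, g t)) := by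
  have hba : (0:ℝ) < b - a := by linarith
  -- tags lie in [a,b]
  have hts_ab : ∀ m k : ℕ, k < m → ts m k ∈ Icc a b := by
    intro m k hk
    have hm' : (0:ℝ) < m := by exact_mod_cast Nat.lt_of_le_of_lt (Nat.zero_le k) hk
    have hk1 : ((k:ℝ) + 1) ≤ m := by exact_mod_cast Nat.succ_le_of_lt hk
    have h := hts m k hk
    constructor
    · have : 0 ≤ (k : ℝ) * (b - a) / m := by positivity
      linarith [h.1]
    · have : ((k:ℝ) + 1) * (b - a) / m ≤ b - a := by
        rw [div_le_iff₀ hm']; nlinarith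
      linarith [h.2]
  -- bound on g
  obtain ⟨M0, hM0⟩ := isCompact_Icc.exists_bound_of_continuousOn hg
  set M : ℝ := max M0 0 with hM
  have hMnn : 0 ≤ M := le_max_right _ _
  have hMb : ∀ x ∈ Icc a b, |g x| ≤ M := fun x hx =>
    le_trans (by simpa using hM0 x hx) (le_max_left _ _)
  -- sup bound on weights
  set T : ℕ → ℝ := fun m => ⨆ k ∈ Finset.range m, w m k with hT
  have hwT : ∀ m k : ℕ, k ∈ Finset.range m → w m k ≤ T m := by
    intro m k hk
    have hfin : (Set.range fun k => ⨆ _ : k ∈ Finset.range m, w m k).Finite := by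
      apply Set.Finite.subset (Set.Finite.insert 0 ((Finset.range m).finite_toSet.image (w m)))
      rintro y ⟨j, rfl⟩
      by_cases hj : j ∈ Finset.range m
      · right
        refine ⟨j, by simpa using hj, ?_⟩
        exact (ciSup_pos (p := j ∈ Finset.range m) (f := fun _ => w m j) hj).symm
      · left
        simp [hj, Real.iSup_of_isEmpty]
    have hbdd : BddAbove (Set.range fun k => ⨆ _ : k ∈ Finset.range m, w m k) :=
      hfin.bddAbove
    have heq : (⨆ _ : k ∈ Finset.range m, w m k) = w m k :=
      ciSup_pos (p := k ∈ Finset.range m) (f := fun _ => w m k) hk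
    calc w m k = ⨆ _ : k ∈ Finset.range m, w m k := heq.symm
      _ ≤ T m := le_ciSup hbdd k
  -- decomposition
  have hsplit : ∀ m : ℕ, ∑ k ∈ Finset.range m \ J m, g (ts m k) * w m k
      = (∑ k ∈ Finset.range m, g (ts m k) * ((b - a) / (m : ℝ)))
        + (∑ k ∈ Finset.range m, g (ts m k) * (w m k - (b - a) / (m : ℝ)))
        - ∑ k ∈ J m, g (ts m k) * w m k := by
    intro m
    rw [Finset.sum_sdiff_eq_sub (hJsub m), ← Finset.sum_add_distrib]
    congr 1
    apply Finset.sum_congr rfl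
    intro k _
    ring
  simp only [hsplit]
  have h1 : Tendsto (fun m : ℕ => ∑ k ∈ Finset.range m, g (ts m k) * ((b - a) / (m : ℝ)))
      atTop (𝓝 (∫ t in a..b, g t)) := riemann_aux a b hab g hg ts hts
  have h2 : Tendsto (fun m : ℕ => ∑ k ∈ Finset.range m,
      g (ts m k) * (w m k - (b - a) / (m : ℝ))) atTop (𝓝 0) := by
    apply squeeze_zero_norm (a := fun m => M * ∑ k ∈ Finset.range m, |w m k - (b - a) / (m : ℝ)|)
    · intro m
      rw [Real.norm_eq_abs, Finset.mul_sum]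
      refine (Finset.abs_sum_le_sum_abs _ _).trans (Finset.sum_le_sum ?_)
      intro k hk
      rw [Finset.mem_range] at hk
      rw [abs_mul]
      exact mul_le_mul_of_nonneg_right (hMb _ (hts_ab m k hk)) (abs_nonneg _)
    · simpa using hwsum.const_mul M
  have h3 : Tendsto (fun m : ℕ => ∑ k ∈ J m, g (ts m k) * w m k) atTop (𝓝 0) := by
    apply squeeze_zero_norm (a := fun m => M * (((J m).card : ℝ) * T m))
    · intro m
      rw [Real.norm_eq_abs]
      refine (Finset.abs_sum_le_sum_abs _ _).trans ?_
      have : ∀ k ∈ J m, |g (ts m k) * w m k| ≤ M * T m := by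
        intro k hk
        have hkr := hJsub m hk
        have hklt := Finset.mem_range.mp hkr
        rw [abs_mul, abs_of_nonneg (hw m k hklt)]
        exact mul_le_mul (hMb _ (hts_ab m k hklt)) (hwT m k hkr) (hw m k hklt) hMnn
      calc ∑ k ∈ J m, |g (ts m k) * w m k| ≤ ∑ _k ∈ J m, M * T m := Finset.sum_le_sum this
        _ = M * (((J m).card : ℝ) * T m) := by
          rw [Finset.sum_const, nsmul_eq_mul]; ring
    · simpa only [mul_zero] using hJmax.const_mul M
  have := (h1.add h2).sub h3
  simpa using this
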